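/- Let M : [0,∞) → ℝ be continuous, with M(0) > 0 and M nondecreasing on [0,∞), continuously differentiable on [R,∞) for some R > 0. Suppose there exists θ > 0 such that M̂(t) − M(t)t/(θ+1) ≥ 0 for all t ≥ 0, where M̂(t) = ∫₀ᵗ M(s) ds, and M̂(t) − M(t)t/(θ+1) → +∞ as t → ∞. Then for every ε > 0 there exist constants C₁, C₂ > 0 such that M(t) ≤ C₁ + C₂ t^{θ+ε} for all t ≥ 0. -/

import Mathlib

open Real MeasureTheory Filter

/-- under conditions (M₁)-(M₂), for every ε > 0 there are constants
`C₁, C₂ > 0` with `M t ≤ C₁ + C₂ * t ^ (θ + ε)` for all `t ≥ 0`. -/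
theorem kirchhoff_coefficient_growth (M : ℝ → ℝ) (R θ : ℝ)
    (hcont : ContinuousOn M (Set.Ici 0))
    (hR : 0 < R) (hC1 : ContDiffOn ℝ 1 M (Set.Ici R))
    (hM0 : 0 < M 0)
    (hmono : MonotoneOn M (Set.Ici 0))
    (hθ : 0 < θ)
    (hAG : ∀ t ≥ (0:ℝ), 0 ≤ (∫ s in (0:ℝ)..t, M s) - M t * t / (θ + 1))
    (hAGtop : Tendsto (fun t => (∫ s in (0:ℝ)..t, M s) - M t * t / (θ + 1)) atTop atTop) :
    ∀ ε > 0, ∃ C₁ > 0, ∃ C₂ > 0, ∀ t ≥ (0:ℝ), M t ≤ C₁ + C₂ * t ^ (θ + ε) := by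
  intro ε hε
  have hθ1 : (0:ℝ) < θ + 1 := by linarith
  set F : ℝ → ℝ := fun t => ∫ s in (0:ℝ)..t, M s with hFdef
  -- integrability
  have hint : ∀ x ≥ (0:ℝ), IntervalIntegrable M volume 0 x := by
    intro x hx
    apply ContinuousOn.intervalIntegrable
    apply hcont.mono
    rw [Set.uIcc_of_le hx]
    exact fun s hs => hs.1
  -- derivative of F at positive points
  have hF' : ∀ t : ℝ, 0 < t → HasDerivAt F (M t) t := by
    intro t ht
    have hmem : Set.Ici (0:ℝ) ∈ nhds t := Ici_mem_nhds ht
    have hct : ContinuousAt M t := hcont.continuousAt hmem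
    have hmeas : StronglyMeasurableAtFilter M (nhds t) volume :=
      ((hcont.mono (Set.Ioi_subset_Ici_self)).stronglyMeasurableAtFilter isOpen_Ioi) t ht
    exact intervalIntegral.integral_hasDerivAt_right (hint t ht.le) hmeas hct
  set T : ℝ := max R 1 with hTdef
  have hT1 : (1:ℝ) ≤ T := le_max_right _ _
  have hT0 : (0:ℝ) < T := lt_of_lt_of_le one_pos hT1
  set p : ℝ := -(θ + 1) with hpdef
  -- the quotient function
  set G : ℝ → ℝ := fun t => F t * t ^ p with hGdef
  have hG' : ∀ t : ℝ, T ≤ t →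
      HasDerivAt G (t ^ (p - 1) * (M t * t - (θ + 1) * F t)) t := by
    intro t ht
    have ht0 : (0:ℝ) < t := lt_of_lt_of_le hT0 ht
    have h1 : HasDerivAt (fun x : ℝ => x ^ p) (p * t ^ (p - 1)) t :=
      Real.hasDerivAt_rpow_const (Or.inl ht0.ne')
    have h2 := (hF' t ht0).mul h1
    refine h2.congr_deriv ?_
    have htp : t ^ p = t * t ^ (p - 1) := by
      nth_rewrite 2 [← Real.rpow_one t]
      rw [← Real.rpow_add ht0, show (1:ℝ) + (p - 1) = p by ring]
    rw [htp, hpdef]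
    ring
  -- G is antitone on [T, ∞)
  have hGanti : AntitoneOn G (Set.Ici T) := by
    apply antitoneOn_of_deriv_nonpos (convex_Ici T)
    · intro t ht
      exact ((hG' t ht).continuousAt).continuousWithinAt
    · intro t ht
      rw [interior_Ici] at ht
      exact ((hG' t ht.le).differentiableAt).differentiableWithinAt
    · intro t ht
      rw [interior_Ici] at ht
      rw [(hG' t ht.le).deriv]
      have ht0 : (0:ℝ) < t := lt_of_lt_of_le hT0 ht.le
      have h1 : (0:ℝ) ≤ t ^ (p - 1) := Real.rpow_nonneg ht0.le _
      have h2 := hAG t ht0.le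
      have h3 : M t * t ≤ (θ + 1) * F t := by
        rw [sub_nonneg, div_le_iff₀ hθ1] at h2
        linarith [h2]
      exact mul_nonpos_of_nonneg_of_nonpos h1 (by linarith)
  -- F T ≥ 0
  have hFT : (0:ℝ) ≤ F T := by
    apply intervalIntegral.integral_nonneg hT0.le
    intro s hs
    exact le_trans hM0.le (hmono (le_refl (0:ℝ)) hs.1 hs.1)
  set K : ℝ := (θ + 1) * (F T * T ^ p) with hKdef
  have hK0 : (0:ℝ) ≤ K :=
    mul_nonneg hθ1.le (mul_nonneg hFT (Real.rpow_nonneg hT0.le _))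
  -- main bound for t ≥ T
  have hmain : ∀ t : ℝ, T ≤ t → M t ≤ K * t ^ θ := by
    intro t ht
    have ht0 : (0:ℝ) < t := lt_of_lt_of_le hT0 ht
    have hGle : F t * t ^ p ≤ F T * T ^ p :=
      hGanti (Set.self_mem_Ici) ht ht
    have h2 := hAG t ht0.le
    have h3 : M t * t ≤ (θ + 1) * F t := by
      rw [sub_nonneg, div_le_iff₀ hθ1] at h2
      linarith [h2]
    have htp : (0:ℝ) < t ^ p := Real.rpow_pos_of_pos ht0 _
    have h4 : F t ≤ (F T * T ^ p) * t ^ (θ + 1) := by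
      have : F t = F t * t ^ p * t ^ (θ + 1) := by
        rw [mul_assoc, ← Real.rpow_add ht0,
          show p + (θ + 1) = 0 from by rw [hpdef]; ring, Real.rpow_zero, mul_one]
      rw [this]
      apply mul_le_mul_of_nonneg_right hGle (Real.rpow_nonneg ht0.le _)
    have h5 : M t * t ≤ K * t ^ (θ + 1) := by
      calc M t * t ≤ (θ + 1) * F t := h3
        _ ≤ (θ + 1) * ((F T * T ^ p) * t ^ (θ + 1)) :=
            mul_le_mul_of_nonneg_left h4 hθ1.le
        _ = K * t ^ (θ + 1) := by rw [hKdef]; ring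
    have h6 : t ^ (θ + 1) = t ^ θ * t := by
      rw [Real.rpow_add ht0, Real.rpow_one]
    rw [h6, ← mul_assoc] at h5
    exact le_of_mul_le_mul_right h5 ht0
  refine ⟨M T, lt_of_lt_of_le hM0 (hmono (le_refl (0:ℝ)) hT0.le hT0.le), K + 1, by linarith, ?_⟩
  intro t ht
  have htθε : (0:ℝ) ≤ t ^ (θ + ε) := Real.rpow_nonneg ht _
  rcases le_or_gt t T with h | h
  · have : M t ≤ M T := hmono ht hT0.le h
    nlinarith [mul_nonneg hK0 htθε]
  · have h1 : M t ≤ K * t ^ θ := hmain t h.le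
    have h2 : t ^ θ ≤ t ^ (θ + ε) :=
      Real.rpow_le_rpow_of_exponent_le (le_trans hT1 h.le) (by linarith)
    have hMT : (0:ℝ) ≤ M T := le_trans hM0.le (hmono (le_refl (0:ℝ)) hT0.le hT0.le)
    nlinarith [mul_le_mul_of_nonneg_left h2 hK0]
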